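/- For the breadth-one deflation with μ ≥ 3, the first-order differential operator L̃₁ = ∂/∂z₁ + 2a_{2,2}∂/∂λ₂ + ⋯ + 2a_{2,n}∂/∂λₙ annihilates the augmented system G(z,λ) = (H(z), H'(z)λ, λ₁−1) at (ẑₑ, e₁); equivalently, applying L̃₁ to the middle block H'(z)λ and evaluating gives 2·L₂(H)(ẑₑ) = 0. -/
import Mathlib


open MvPolynomial Matrix

/-- The augmented (deflated) system `G(z,λ) = (H(z), H'(z)·λ, λ₁ − 1)` as a system of
`2n+1` polynomials in the `2n` variables `(z, λ)`. -/
noncomputable def augSys {n : ℕ} (H : Fin (n + 1) → MvPolynomial (Fin (n + 1)) ℂ) :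
    (Fin (n + 1) ⊕ (Fin (n + 1) ⊕ Unit)) → MvPolynomial (Fin (n + 1) ⊕ Fin (n + 1)) ℂ :=
  Sum.elim (fun i => MvPolynomial.rename Sum.inl (H i))
    (Sum.elim
      (fun i => ∑ j, MvPolynomial.rename Sum.inl (MvPolynomial.pderiv j (H i)) *
          MvPolynomial.X (Sum.inr j))
      (fun _ => MvPolynomial.X (Sum.inr 0) - 1))

/-- The Jacobian of the augmented system at a point `(z, λ)`. -/
noncomputable def augJac {n : ℕ} (H : Fin (n + 1) → MvPolynomial (Fin (n + 1)) ℂ)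
    (q : Fin (n + 1) ⊕ Fin (n + 1) → ℂ) :
    Matrix (Fin (n + 1) ⊕ (Fin (n + 1) ⊕ Unit)) (Fin (n + 1) ⊕ Fin (n + 1)) ℂ :=
  Matrix.of fun r col => MvPolynomial.eval q (MvPolynomial.pderiv col (augSys H r))

/-- For the breadth-one deflation with `μ ≥ 3`, the first-order differential operator
`L̃₁ = ∂/∂z₁ + 2a_{2,2}∂/∂λ₂ + ⋯ + 2a_{2,n}∂/∂λₙ` annihilates the augmented system
`G(z,λ) = (H(z), H'(z)λ, λ₁−1)` at `(ẑₑ, e₁)`; in particular on the middle block `H'(z)λ`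
it evaluates to `2·L₂(H)(ẑₑ) = 0`. -/
lemma pderiv_rename_ne {σ τ : Type*} {f : σ → τ} {t : τ}
    (h : ∀ s, f s ≠ t) (p : MvPolynomial σ ℂ) :
    MvPolynomial.pderiv t (MvPolynomial.rename f p) = 0 := by
  classical
  apply MvPolynomial.pderiv_eq_zero_of_notMem_vars
  intro hm
  obtain ⟨s, _, hs⟩ := Finset.mem_image.mp (MvPolynomial.vars_rename f p hm)
  exact h s hs

theorem augmented_first_order_noether_condition {n : ℕ}
    (H : Fin (n + 1) → MvPolynomial (Fin (n + 1)) ℂ)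
    (ze : Fin (n + 1) → ℂ) (a : Fin (n + 1) → ℂ) (ha0 : a 0 = 0)
    (hzero : ∀ i, MvPolynomial.eval ze (H i) = 0)
    (hfirst : ∀ i, MvPolynomial.eval ze (MvPolynomial.pderiv 0 (H i)) = 0)
    (hL2 : ∀ i, (1 / 2 : ℂ) *
          MvPolynomial.eval ze (MvPolynomial.pderiv 0 (MvPolynomial.pderiv 0 (H i))) +
        ∑ j, a j * MvPolynomial.eval ze (MvPolynomial.pderiv j (H i)) = 0) :
    (∀ r, MvPolynomial.eval (Sum.elim ze fun l => if l = 0 then 1 else 0)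
          (MvPolynomial.pderiv (Sum.inl 0) (augSys H r)) +
        ∑ j, 2 * a j * MvPolynomial.eval (Sum.elim ze fun l => if l = 0 then 1 else 0)
          (MvPolynomial.pderiv (Sum.inr j) (augSys H r)) = 0) ∧
    (∀ i, MvPolynomial.eval (Sum.elim ze fun l => if l = 0 then 1 else 0)
          (MvPolynomial.pderiv (Sum.inl 0) (augSys H (Sum.inr (Sum.inl i)))) +
        ∑ j, 2 * a j * MvPolynomial.eval (Sum.elim ze fun l => if l = 0 then 1 else 0)
          (MvPolynomial.pderiv (Sum.inr j) (augSys H (Sum.inr (Sum.inl i)))) =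
        2 * ((1 / 2 : ℂ) *
            MvPolynomial.eval ze (MvPolynomial.pderiv 0 (MvPolynomial.pderiv 0 (H i))) +
          ∑ j, a j * MvPolynomial.eval ze (MvPolynomial.pderiv j (H i)))) := by
  have hkey : ∀ i : Fin (n + 1),
      MvPolynomial.eval (Sum.elim ze fun l => if l = 0 then 1 else 0)
          (MvPolynomial.pderiv (Sum.inl 0) (augSys H (Sum.inr (Sum.inl i)))) +
        ∑ j, 2 * a j * MvPolynomial.eval (Sum.elim ze fun l => if l = 0 then 1 else 0)
          (MvPolynomial.pderiv (Sum.inr j) (augSys H (Sum.inr (Sum.inl i)))) =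
      MvPolynomial.eval ze (MvPolynomial.pderiv 0 (MvPolynomial.pderiv 0 (H i))) +
        ∑ j, 2 * a j * MvPolynomial.eval ze (MvPolynomial.pderiv j (H i)) := by
    intro i
    simp [augSys, pderiv_mul, pderiv_rename Sum.inl_injective,
      pderiv_rename_ne (fun s => Sum.inl_ne_inr (b := _)), eval_rename,
      Pi.single_apply, mul_comm, Finset.mul_sum, Finset.sum_ite_eq', apply_ite]
  have hsum : ∀ i : Fin (n + 1),
      ∑ j, 2 * a j * MvPolynomial.eval ze (MvPolynomial.pderiv j (H i)) =
        2 * ∑ j, a j * MvPolynomial.eval ze (MvPolynomial.pderiv j (H i)) := by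
    intro i
    rw [Finset.mul_sum]
    exact Finset.sum_congr rfl fun j _ => by ring
  constructor
  · rintro (i | i | u)
    · simp [augSys, pderiv_rename Sum.inl_injective,
        pderiv_rename_ne (fun s => Sum.inl_ne_inr (b := _)), eval_rename, hfirst i]
    · rw [hkey i, hsum i]
      linear_combination 2 * hL2 i
    · simp [augSys, Pi.single_apply, ha0]
  · intro i
    rw [hkey i, hsum i]
    ring
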